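/- Let A be an idempotented algebra and e ∈ A a left special idempotent. Then the functor Hom_A(Ae, −) : M(A)_e → M(eAe) is an equivalence of categories, with quasi-inverse A ⊗_{eAe} (−). -/

import Mathlib

open scoped TensorProduct

set_option linter.unusedSectionVars false

universe u

section Setup

variable (K : Type u) [CommRing K]
variable (A : Type u) [NonUnitalRing A] [Module K A]
  [SMulCommClass K A A] [IsScalarTower K A A]

/-- A (not necessarily non-degenerate) left module over the non-unital `K`-algebra `A`:
an abelian group with compatible `K`- and `A`-actions, the `A`-action being `K`-bilinear. -/
class NUMod (M : Type u) [AddCommGroup M] [Module K M] extends SMul A M where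
  asmul_add : ∀ (a : A) (m n : M), a • (m + n) = a • m + a • n
  add_asmul : ∀ (a b : A) (m : M), (a + b) • m = a • m + b • m
  mul_asmul : ∀ (a b : A) (m : M), (a * b) • m = a • (b • m)
  asmul_ksmul : ∀ (k : K) (a : A) (m : M), a • (k • m) = k • (a • m)
  ksmul_asmul : ∀ (k : K) (a : A) (m : M), (k • a) • m = k • (a • m)

/-- `A` is an idempotented algebra. -/
def Idempotented : Prop :=
  (∀ a : A, ∃ e : A, e * e = e ∧ e * a = a ∧ a * e = a) ∧
  ∀ e₁ e₂ : A, e₁ * e₁ = e₁ → e₂ * e₂ = e₂ →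
    ∃ e : A, e * e = e ∧ e * e₁ = e₁ ∧ e₁ * e = e₁ ∧ e * e₂ = e₂ ∧ e₂ * e = e₂

/-- A module is non-degenerate if every element is fixed by some idempotent of `A`. -/
def Nondeg (M : Type u) [AddCommGroup M] [Module K M] [NUMod K A M] : Prop :=
  ∀ m : M, ∃ e : A, e * e = e ∧ e • m = m

/-- A `K`-submodule which is stable under the `A`-action, i.e. an `A`-submodule. -/
def AStable {M : Type u} [AddCommGroup M] [Module K M] [NUMod K A M]
    (S : Submodule K M) : Prop :=
  ∀ a : A, ∀ m ∈ S, a • m ∈ S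

/-- `A`-linearity of a `K`-linear map between `A`-modules. -/
def IsAMap {M N : Type u} [AddCommGroup M] [Module K M] [NUMod K A M]
    [AddCommGroup N] [Module K N] [NUMod K A N] (f : M →ₗ[K] N) : Prop :=
  ∀ (a : A) (m : M), f (a • m) = a • f m

theorem asmul_zero {M : Type u} [AddCommGroup M] [Module K M] [NUMod K A M] (a : A) :
    a • (0 : M) = 0 := by
  have h := NUMod.asmul_add (K := K) (A := A) a (0 : M) 0
  rw [add_zero] at h
  exact add_left_cancel (show a • (0 : M) + a • (0 : M) = a • (0 : M) + 0 by
    rw [add_zero]; exact h.symm)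

variable {A}

/-- The subset `eM = {e m : m ∈ M}` of a module `M`, as a `K`-submodule. -/
def eSub (e : A) (M : Type u) [AddCommGroup M] [Module K M] [NUMod K A M] :
    Submodule K M where
  carrier := {m : M | ∃ n : M, e • n = m}
  zero_mem' := ⟨0, asmul_zero K A e⟩
  add_mem' := by
    rintro x y ⟨m, rfl⟩ ⟨n, rfl⟩
    exact ⟨m + n, NUMod.asmul_add e m n⟩
  smul_mem' := by
    rintro k x ⟨m, rfl⟩
    exact ⟨k • m, NUMod.asmul_ksmul k e m⟩

/-- The submodule `AeM` of `M` generated by the elements `a • (e • m)`. -/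
def aeSpan (e : A) (M : Type u) [AddCommGroup M] [Module K M] [NUMod K A M] :
    Submodule K M :=
  Submodule.span K {x : M | ∃ (a : A) (m : M), a • (e • m) = x}

/-- The left ideal `Ae = {a e : a ∈ A}` (for an idempotent `e`), as a `K`-submodule of `A`. -/
def leftIdeal (e : A) : Submodule K A where
  carrier := {x : A | ∃ a : A, a * e = x}
  zero_mem' := ⟨0, zero_mul e⟩
  add_mem' := by
    rintro x y ⟨a, rfl⟩ ⟨b, rfl⟩
    exact ⟨a + b, add_mul a b e⟩
  smul_mem' := by
    rintro k x ⟨a, rfl⟩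
    exact ⟨k • a, smul_mul_assoc k a e⟩

/-- The right ideal `eA = {e a : a ∈ A}` (for an idempotent `e`), as a `K`-submodule of `A`. -/
def rightIdeal (e : A) : Submodule K A where
  carrier := {x : A | ∃ a : A, e * a = x}
  zero_mem' := ⟨0, mul_zero e⟩
  add_mem' := by
    rintro x y ⟨a, rfl⟩ ⟨b, rfl⟩
    exact ⟨a + b, mul_add e a b⟩
  smul_mem' := by
    rintro k x ⟨a, rfl⟩
    exact ⟨k • a, mul_smul_comm k e a⟩

/-- The `A`-balancing relations inside `eA ⊗_K M`, whose quotient is `eA ⊗_A M`. -/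
def brel (e : A) (M : Type u) [AddCommGroup M] [Module K M] [NUMod K A M] :
    Submodule K (↥(rightIdeal K e) ⊗[K] M) :=
  Submodule.span K {z : ↥(rightIdeal K e) ⊗[K] M |
    ∃ (x y : ↥(rightIdeal K e)) (a : A) (m : M),
      (y : A) = (x : A) * a ∧ z = y ⊗ₜ[K] m - x ⊗ₜ[K] (a • m)}

/-- The `A`-balancing relations inside `eA ⊗_K S` for a `K`-submodule `S ≤ M`. -/
def brelSub (e : A) {M : Type u} [AddCommGroup M] [Module K M] [NUMod K A M]
    (S : Submodule K M) : Submodule K (↥(rightIdeal K e) ⊗[K] ↥S) :=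
  Submodule.span K {z : ↥(rightIdeal K e) ⊗[K] ↥S |
    ∃ (x y : ↥(rightIdeal K e)) (a : A) (m m' : ↥S),
      (y : A) = (x : A) * a ∧ (m' : M) = a • (m : M) ∧ z = y ⊗ₜ[K] m - x ⊗ₜ[K] m'}

variable (A)

/-- An idempotent `e` is left special if the class of non-degenerate modules `M` with
`M = AeM` is closed under subquotients: for `A`-stable submodules `Ksub ≤ H` of such an
`M`, the subquotient `H/Ksub` is again generated by its `e`-fixed vectors. -/
def LeftSpecial (e : A) : Prop :=
  ∀ (X : Type u) [AddCommGroup X] [Module K X] [NUMod K A X],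
    Nondeg K A X → aeSpan K e X = ⊤ →
    ∀ Ksub H : Submodule K X, AStable K A Ksub → AStable K A H → Ksub ≤ H →
      H ≤ Ksub ⊔ Submodule.span K {x : X | ∃ a : A, ∃ m ∈ H, a • (e • m) = x}

end Setup

section Corner

variable {K : Type u} [CommRing K]
variable {A : Type u} [NonUnitalRing A] [Module K A]
  [SMulCommClass K A A] [IsScalarTower K A A]

/-- The corner `eAe` of `A` at an idempotent `e`, as a non-unital subring of `A`
(it is in fact a unital ring with identity `e`). -/
def corner (e : A) (he : e * e = e) : NonUnitalSubring A where
  carrier := {x : A | e * x * e = x}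
  zero_mem' := by simp
  add_mem' := by
    intro x y hx hy
    simp only [Set.mem_setOf_eq] at *
    rw [mul_add, add_mul, hx, hy]
  neg_mem' := by
    intro x hx
    simp only [Set.mem_setOf_eq] at *
    rw [mul_neg, neg_mul, hx]
  mul_mem' := by
    intro x y hx hy
    simp only [Set.mem_setOf_eq] at *
    have hex : e * x = x := by
      conv_lhs => rw [← hx]
      rw [← mul_assoc, ← mul_assoc, he, hx]
    have hye : y * e = y := by
      conv_lhs => rw [← hy]
      rw [mul_assoc, mul_assoc, he, ← mul_assoc, hy]
    rw [← mul_assoc e x y, hex, mul_assoc, hye]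

theorem e_mem_corner (e : A) (he : e * e = e) : e ∈ corner e he := by
  show e * e * e = e
  rw [he, he]

end Corner

/-- A bundled left `A`-module. -/
structure ModBundle (K A : Type u) [CommRing K] [NonUnitalRing A] [Module K A] where
  carrier : Type u
  [addCommGroup : AddCommGroup carrier]
  [module : Module K carrier]
  [numod : NUMod K A carrier]

attribute [instance] ModBundle.addCommGroup ModBundle.module ModBundle.numod

section Aux

variable {K : Type u} [CommRing K]
variable {A : Type u} [NonUnitalRing A] [Module K A]
  [SMulCommClass K A A] [IsScalarTower K A A]

namespace EMAux

theorem mul_corner_left {e : A} (he : e * e = e) (x : A) : e * (e * x * e) = e * x * e := by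
  rw [show e * x * e = e * (x * e) by rw [mul_assoc], ← mul_assoc e e, he]

theorem mul_corner_right {e : A} (he : e * e = e) (x : A) : (e * x * e) * e = e * x * e := by
  rw [mul_assoc, he]

theorem corner_mem' {e : A} (he : e * e = e) (x : A) : e * x * e ∈ corner e he := by
  show e * (e * x * e) * e = e * x * e
  rw [mul_corner_left he, mul_corner_right he]

theorem e_mul_corner {e : A} (he : e * e = e) (c : ↥(corner e he)) : e * (c : A) = c := by
  have hc : e * (c : A) * e = c := c.2
  rw [← hc, mul_corner_left he]

theorem corner_mul_e {e : A} (he : e * e = e) (c : ↥(corner e he)) : (c : A) * e = c := by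
  have hc : e * (c : A) * e = c := c.2
  rw [← hc, mul_corner_right he]

theorem leftIdeal_mul_e {e : A} (he : e * e = e) (x : ↥(leftIdeal K e)) :
    (x : A) * e = x := by
  obtain ⟨b, hb⟩ := x.2
  rw [← hb, mul_assoc, he]

/-- Idempotents fixing two elements can be joined. -/
theorem nondeg_add (hA : Idempotented A) {X : Type u} [AddCommGroup X] [Module K X]
    [NUMod K A X] {m n : X}
    (hm : ∃ f : A, f * f = f ∧ f • m = m) (hn : ∃ f : A, f * f = f ∧ f • n = n) :
    ∃ f : A, f * f = f ∧ f • (m + n) = m + n := by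
  obtain ⟨f₁, hf₁, h1⟩ := hm
  obtain ⟨f₂, hf₂, h2⟩ := hn
  obtain ⟨f, hf, hff₁, -, hff₂, -⟩ := hA.2 f₁ f₂ hf₁ hf₂
  refine ⟨f, hf, ?_⟩
  have hm' : f • m = m := by rw [← h1, ← NUMod.mul_asmul, hff₁]
  have hn' : f • n = n := by rw [← h2, ← NUMod.mul_asmul, hff₂]
  rw [NUMod.asmul_add, hm', hn']

theorem eFix {e : A} (he : e * e = e) {X : Type u} [AddCommGroup X] [Module K X]
    [NUMod K A X] {x : X} (hx : x ∈ eSub K e X) : e • x = x := by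
  obtain ⟨n, rfl⟩ := hx
  rw [← NUMod.mul_asmul, he]

theorem aStable_span {X : Type u} [AddCommGroup X] [Module K X] [NUMod K A X]
    (S : Set X) (h : ∀ a : A, ∀ s ∈ S, a • s ∈ Submodule.span K S) :
    AStable K A (Submodule.span K S) := by
  intro a m hm
  induction hm using Submodule.span_induction with
  | mem x hx => exact h a x hx
  | zero => rw [asmul_zero K A]; exact Submodule.zero_mem _
  | add x y _ _ hx hy => rw [NUMod.asmul_add]; exact Submodule.add_mem _ hx hy
  | smul k x _ hx => rw [NUMod.asmul_ksmul]; exact Submodule.smul_mem _ k hx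

end EMAux

end Aux

namespace EMAux

noncomputable section Part2

variable {K : Type u} [CommRing K]
variable {A : Type u} [NonUnitalRing A] [Module K A]
  [SMulCommClass K A A] [IsScalarTower K A A]
variable (e : A) (he : e * e = e)
variable (V : Type u) [AddCommGroup V] [Module K V]
variable (μ : ↥(corner e he) → V →ₗ[K] V)

/-- Left multiplication by `a` on the left ideal `Ae`. -/
def mulL (a : A) : ↥(leftIdeal K e) →ₗ[K] ↥(leftIdeal K e) where
  toFun x := ⟨a * x, by
    obtain ⟨b, hb⟩ := x.2
    exact ⟨a * b, by rw [← hb, mul_assoc]⟩⟩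
  map_add' x y := Subtype.ext (by
    show a * ((x : A) + y) = a * x + a * y
    rw [mul_add])
  map_smul' k x := Subtype.ext (by
    show a * (k • (x : A)) = k • (a * x)
    rw [mul_smul_comm])

theorem mul_corner_mem_leftIdeal (x : ↥(leftIdeal K e)) (c : ↥(corner e he)) :
    (x : A) * c ∈ leftIdeal K e := by
  have hc : e * (c : A) * e = c := c.2
  exact ⟨(x : A) * (e * c), by rw [mul_assoc, hc]⟩

/-- The relations defining `Ae ⊗_{eAe} V` inside `Ae ⊗_K V`. -/
def relS : Submodule K (↥(leftIdeal K e) ⊗[K] V) :=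
  Submodule.span K {z | ∃ (x : ↥(leftIdeal K e)) (c : ↥(corner e he)) (v : V),
    z = (⟨(x : A) * c, mul_corner_mem_leftIdeal e he x c⟩ : ↥(leftIdeal K e)) ⊗ₜ[K] v
        - x ⊗ₜ[K] (μ c v)}

/-- The candidate module `A ⊗_{eAe} V = (Ae ⊗_K V) / rel`. -/
def Mq : Type u := (↥(leftIdeal K e) ⊗[K] V) ⧸ relS e he V μ

instance : AddCommGroup (Mq e he V μ) := by unfold Mq; infer_instance
instance : Module K (Mq e he V μ) := by unfold Mq; infer_instance

/-- The action of `a : A` on the tensor product, before passing to the quotient. -/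
def actT (a : A) : (↥(leftIdeal K e) ⊗[K] V) →ₗ[K] (↥(leftIdeal K e) ⊗[K] V) :=
  LinearMap.rTensor V (mulL e a)

theorem actT_rel (a : A) : relS e he V μ ≤ (relS e he V μ).comap (actT e V a) := by
  rw [relS, Submodule.span_le]
  rintro z ⟨x, c, v, rfl⟩
  show actT e V a _ ∈ relS e he V μ
  rw [map_sub]
  apply Submodule.subset_span
  refine ⟨mulL e a x, c, v, ?_⟩
  congr 1
  show (mulL e a _) ⊗ₜ[K] v = _
  congr 1
  exact Subtype.ext (mul_assoc a (x : A) (c : A)).symm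

/-- The action of `a : A` on the quotient. -/
def actQ (a : A) : Mq e he V μ →ₗ[K] Mq e he V μ :=
  Submodule.mapQ _ _ (actT e V a) (actT_rel e he V μ a)

/-- Class of a pure tensor in `Mq`. -/
def mk (x : ↥(leftIdeal K e)) (v : V) : Mq e he V μ :=
  Submodule.Quotient.mk (x ⊗ₜ[K] v)

theorem actQ_mk (a : A) (x : ↥(leftIdeal K e)) (v : V) :
    actQ e he V μ a (mk e he V μ x v) = mk e he V μ (mulL e a x) v := by
  show Submodule.mapQ _ _ _ _ (Submodule.Quotient.mk _) = _
  rw [Submodule.mapQ_apply]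
  rfl

theorem Mq.ind {P : Mq e he V μ → Prop} (h0 : P 0)
    (hadd : ∀ x y, P x → P y → P (x + y))
    (htm : ∀ x v, P (mk e he V μ x v)) : ∀ m, P m := by
  intro m
  obtain ⟨t, rfl⟩ := Submodule.Quotient.mk_surjective _ m
  induction t using TensorProduct.induction_on with
  | zero => exact h0
  | tmul x v => exact htm x v
  | add x y hx hy =>
    rw [Submodule.Quotient.mk_add]
    exact hadd _ _ hx hy

instance : NUMod K A (Mq e he V μ) where
  smul a m := actQ e he V μ a m
  asmul_add a m n := (actQ e he V μ a).map_add m n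
  add_asmul a b m := by
    show actQ e he V μ (a + b) m = actQ e he V μ a m + actQ e he V μ b m
    induction m using Mq.ind with
    | h0 => simp
    | hadd x y hx hy => rw [map_add, map_add, map_add, hx, hy]; abel
    | htm x v =>
      rw [actQ_mk, actQ_mk, actQ_mk]
      have : mulL e (a + b) x = mulL e a x + mulL e b x :=
        Subtype.ext (add_mul a b (x : A))
      rw [this]
      show Submodule.Quotient.mk _ = _
      rw [TensorProduct.add_tmul, Submodule.Quotient.mk_add]
      rfl
  mul_asmul a b m := by
    show actQ e he V μ (a * b) m = actQ e he V μ a (actQ e he V μ b m)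
    induction m using Mq.ind with
    | h0 => simp
    | hadd x y hx hy => rw [map_add, map_add, map_add, hx, hy]
    | htm x v =>
      rw [actQ_mk, actQ_mk, actQ_mk]
      congr 1
      exact Subtype.ext (mul_assoc a b (x : A))
  asmul_ksmul k a m := (actQ e he V μ a).map_smul k m
  ksmul_asmul k a m := by
    show actQ e he V μ (k • a) m = k • actQ e he V μ a m
    induction m using Mq.ind with
    | h0 => simp
    | hadd x y hx hy => rw [map_add, map_add, hx, hy, smul_add]
    | htm x v =>
      rw [actQ_mk, actQ_mk]
      have : mulL e (k • a) x = k • mulL e a x :=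
        Subtype.ext (smul_mul_assoc k a (x : A))
      rw [this]
      show Submodule.Quotient.mk _ = _
      rw [← TensorProduct.smul_tmul']
      exact (Submodule.Quotient.mk_smul _ _ _).symm

theorem smul_def (a : A) (m : Mq e he V μ) : a • m = actQ e he V μ a m := rfl

end Part2

end EMAux

namespace EMAux

noncomputable section Part2b

variable {K : Type u} [CommRing K]
variable {A : Type u} [NonUnitalRing A] [Module K A]
  [SMulCommClass K A A] [IsScalarTower K A A]
variable (e : A) (he : e * e = e)
variable (V : Type u) [AddCommGroup V] [Module K V]
variable (μ : ↥(corner e he) → V →ₗ[K] V)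

/-- `e` as an element of the left ideal `Ae`. -/
def eE : ↥(leftIdeal K e) := ⟨e, ⟨e, he⟩⟩

/-- The corner element `e x e` attached to `x ∈ Ae`. -/
def cornerOf (x : ↥(leftIdeal K e)) : ↥(corner e he) :=
  ⟨e * x * e, corner_mem' he _⟩

include he in
theorem exe_eq (x : ↥(leftIdeal K e)) : e * (x : A) * e = e * (x : A) := by
  rw [mul_assoc, leftIdeal_mul_e he x]

variable (hadd' : ∀ (c c' : ↥(corner e he)) (v : V), μ (c + c') v = μ c v + μ c' v)
variable (hk' : ∀ (k : K) (c c' : ↥(corner e he)), (c' : A) = k • (c : A) →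
  ∀ v : V, μ c' v = k • μ c v)
variable (hmul : ∀ c c' : ↥(corner e he), μ (c * c') = μ c ∘ₗ μ c')
include hadd' hk' in

/-- The pairing `Ae × V → V`, `(x, v) ↦ μ(e x e) v`, as a bilinear map. -/
def Phi : ↥(leftIdeal K e) →ₗ[K] V →ₗ[K] V where
  toFun x := μ (cornerOf e he x)
  map_add' x y := LinearMap.ext fun v => by
    have h : cornerOf e he (x + y) = cornerOf e he x + cornerOf e he y :=
      Subtype.ext (by
        show e * ((x : A) + y) * e = e * x * e + e * y * e
        rw [mul_add, add_mul])
    simp only [LinearMap.add_apply]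
    rw [h]
    exact hadd' _ _ v
  map_smul' k x := LinearMap.ext fun v => by
    have h : ((cornerOf e he (k • x)) : A) = k • ((cornerOf e he x) : A) := by
      show e * (k • (x : A)) * e = k • (e * (x : A) * e)
      rw [mul_smul_comm, smul_mul_assoc]
    simp only [RingHom.id_apply, LinearMap.smul_apply]
    exact hk' k _ _ h v

include hadd' hk' hmul in
theorem phi_ker : relS e he V μ ≤
    LinearMap.ker (TensorProduct.lift (Phi e he V μ hadd' hk')) := by
  rw [relS, Submodule.span_le]
  rintro z ⟨x, c, v, rfl⟩
  rw [SetLike.mem_coe, LinearMap.mem_ker, map_sub, TensorProduct.lift.tmul,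
    TensorProduct.lift.tmul]
  show μ (cornerOf e he ⟨(x : A) * c, _⟩) v - μ (cornerOf e he x) (μ c v) = 0
  have h : cornerOf e he ⟨(x : A) * c, mul_corner_mem_leftIdeal e he x c⟩ =
      cornerOf e he x * c := Subtype.ext (by
    show e * ((x : A) * c) * e = e * (x : A) * e * c
    have l1 : e * ((x : A) * c) * e = e * ((x : A) * c) := by
      rw [mul_assoc e ((x : A) * c) e, mul_assoc (x : A) (c : A) e, corner_mul_e he c]
    have l2 : e * (x : A) * e * c = e * ((x : A) * c) := by
      rw [mul_assoc (e * (x : A)) e (c : A), e_mul_corner he c, mul_assoc]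
    rw [l1, l2])
  rw [h, hmul]
  simp

/-- The map `φ : Mq → V`, the inverse of `η` on `e·Mq`. -/
def phibar : Mq e he V μ →ₗ[K] V :=
  Submodule.liftQ _ (TensorProduct.lift (Phi e he V μ hadd' hk'))
    (phi_ker e he V μ hadd' hk' hmul)

include hadd' hk' hmul in
theorem phibar_mk (x : ↥(leftIdeal K e)) (v : V) :
    phibar e he V μ hadd' hk' hmul (mk e he V μ x v) = μ (cornerOf e he x) v := by
  show Submodule.liftQ _ _ _ (Submodule.Quotient.mk _) = _
  rw [Submodule.liftQ_apply, TensorProduct.lift.tmul]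
  rfl

/-- The map `η : V → Mq`, `v ↦ [e ⊗ v]`. -/
def eta : V →ₗ[K] Mq e he V μ :=
  LinearMap.comp (Submodule.mkQ _)
    ((TensorProduct.mk K (↥(leftIdeal K e)) V) (eE e he))

theorem eta_apply (v : V) : eta e he V μ v = mk e he V μ (eE e he) v := rfl

theorem mk_rel (x : ↥(leftIdeal K e)) (c : ↥(corner e he)) (v : V) :
    mk e he V μ ⟨(x : A) * c, mul_corner_mem_leftIdeal e he x c⟩ v
      = mk e he V μ x (μ c v) := by
  show (Submodule.Quotient.mk _ : (↥(leftIdeal K e) ⊗[K] V) ⧸ relS e he V μ) = Submodule.Quotient.mk _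
  rw [← sub_eq_zero, ← Submodule.Quotient.mk_sub, Submodule.Quotient.mk_eq_zero]
  exact Submodule.subset_span ⟨x, c, v, rfl⟩

theorem eta_fix (v : V) : e • eta e he V μ v = eta e he V μ v := by
  rw [eta_apply, smul_def, actQ_mk]
  congr 1
  exact Subtype.ext (by show e * e = e; exact he)

theorem eta_mem (v : V) : eta e he V μ v ∈ eSub K e (Mq e he V μ) :=
  ⟨eta e he V μ v, eta_fix e he V μ v⟩

include hadd' hk' hmul in
theorem phibar_eta (hid : μ ⟨e, e_mem_corner e he⟩ = LinearMap.id) (v : V) :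
    phibar e he V μ hadd' hk' hmul (eta e he V μ v) = v := by
  rw [eta_apply e he V μ, phibar_mk e he V μ hadd' hk' hmul]
  have h : cornerOf (K := K) e he (eE (K := K) e he) = ⟨e, e_mem_corner e he⟩ :=
    Subtype.ext (by show e * e * e = e; rw [he, he])
  rw [h, hid]
  rfl

include hadd' hk' hmul in
theorem phibar_corner (c : ↥(corner e he)) (m : Mq e he V μ) :
    phibar e he V μ hadd' hk' hmul ((c : A) • m)
      = μ c (phibar e he V μ hadd' hk' hmul m) := by
  induction m using Mq.ind with
  | h0 => simp [smul_def]
  | hadd x y hx hy =>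
    rw [NUMod.asmul_add, map_add, hx, hy, map_add, map_add]
  | htm x v =>
    rw [smul_def, actQ_mk, phibar_mk, phibar_mk]
    have h : cornerOf e he (mulL e (c : A) x) = c * cornerOf e he x :=
      Subtype.ext (by
        show e * ((c : A) * x) * e = (c : A) * (e * (x : A) * e)
        rw [exe_eq e he x, ← mul_assoc e (c : A) (x : A), e_mul_corner he c,
          mul_assoc (c : A) (x : A) e, leftIdeal_mul_e he x,
          ← mul_assoc (c : A) e (x : A), corner_mul_e he c])
    rw [h, hmul]
    rfl

include hadd' hk' hmul in
theorem e_smul_eq (m : Mq e he V μ) :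
    e • m = eta e he V μ (phibar e he V μ hadd' hk' hmul m) := by
  induction m using Mq.ind with
  | h0 => simp [smul_def]
  | hadd x y hx hy => rw [NUMod.asmul_add, hx, hy, map_add, map_add]
  | htm x v =>
    rw [smul_def, actQ_mk, phibar_mk, eta_apply,
      ← mk_rel e he V μ (eE e he) (cornerOf e he x) v]
    congr 1
    apply Subtype.ext
    show e * (x : A) = (e : A) * (e * (x : A) * e)
    rw [mul_corner_left he, exe_eq e he x]

theorem nondeg_Mq (hA : Idempotented A) : Nondeg K A (Mq e he V μ) := by
  intro m
  induction m using Mq.ind with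
  | h0 =>
    obtain ⟨f, hf, -, -⟩ := hA.1 0
    exact ⟨f, hf, asmul_zero K A f⟩
  | hadd x y hx hy => exact nondeg_add hA hx hy
  | htm x v =>
    obtain ⟨b, hb⟩ := x.2
    obtain ⟨f, hf, hfb, -⟩ := hA.1 b
    refine ⟨f, hf, ?_⟩
    rw [smul_def, actQ_mk]
    congr 1
    apply Subtype.ext
    show f * (x : A) = x
    rw [← hb, ← mul_assoc, hfb]

theorem aeSpan_Mq : aeSpan K e (Mq e he V μ) = ⊤ := by
  rw [eq_top_iff]
  rintro m -
  induction m using Mq.ind with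
  | h0 => exact Submodule.zero_mem _
  | hadd x y hx hy => exact Submodule.add_mem _ hx hy
  | htm x v =>
    obtain ⟨b, hb⟩ := x.2
    apply Submodule.subset_span
    refine ⟨b, mk e he V μ (eE e he) v, ?_⟩
    have h1 : e • mk e he V μ (eE e he) v = mk e he V μ (eE e he) v := by
      rw [smul_def, actQ_mk]
      congr 1
      exact Subtype.ext (by show e * e = e; exact he)
    rw [h1, smul_def, actQ_mk]
    congr 1
    exact Subtype.ext (by show b * e = (x : A); exact hb)

end Part2b

end EMAux

namespace EMAux

section Part2c

variable {K : Type u} [CommRing K]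
variable {A : Type u} [NonUnitalRing A] [Module K A]
  [SMulCommClass K A A] [IsScalarTower K A A]

theorem part2 (hA : Idempotented A) (e : A) (he : e * e = e)
    (V : Type u) [AddCommGroup V] [Module K V]
    (μ : ↥(corner e he) → V →ₗ[K] V)
    (hmul : ∀ c c' : ↥(corner e he), μ (c * c') = μ c ∘ₗ μ c')
    (hadd' : ∀ (c c' : ↥(corner e he)) (v : V), μ (c + c') v = μ c v + μ c' v)
    (hid : μ ⟨e, e_mem_corner e he⟩ = LinearMap.id)
    (hk' : ∀ (k : K) (c c' : ↥(corner e he)), (c' : A) = k • (c : A) →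
      ∀ v : V, μ c' v = k • μ c v) :
    ∃ M : ModBundle K A, Nondeg K A M.carrier ∧ aeSpan K e M.carrier = ⊤ ∧
      ∃ g : ↥(eSub K e M.carrier) ≃ₗ[K] V,
        ∀ (c : ↥(corner e he)) (x y : ↥(eSub K e M.carrier)),
          (y : M.carrier) = (c : A) • (x : M.carrier) → g y = μ c (g x) := by
  refine ⟨⟨Mq e he V μ⟩, nondeg_Mq e he V μ hA, aeSpan_Mq e he V μ, ?_⟩
  set φ := phibar e he V μ hadd' hk' hmul with hφ
  set Gl : ↥(eSub K e (Mq e he V μ)) →ₗ[K] V :=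
    φ.comp (Submodule.subtype _) with hGl
  have hGl_apply : ∀ x : ↥(eSub K e (Mq e he V μ)), Gl x = φ (x : Mq e he V μ) :=
    fun _ => rfl
  have hfix : ∀ x : ↥(eSub K e (Mq e he V μ)),
      (x : Mq e he V μ) = eta e he V μ (φ (x : Mq e he V μ)) := by
    intro x
    obtain ⟨n, hn⟩ := x.2
    have h1 : (x : Mq e he V μ) = eta e he V μ (φ n) := by
      rw [← hn, hφ]
      exact e_smul_eq e he V μ hadd' hk' hmul n
    rw [h1, phibar_eta e he V μ hadd' hk' hmul hid]
  have hinj : Function.Injective Gl := by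
    intro x y hxy
    apply Subtype.ext
    rw [hfix x, hfix y, ← hGl_apply, ← hGl_apply, hxy]
  have hsurj : Function.Surjective Gl := fun v =>
    ⟨⟨eta e he V μ v, eta_mem e he V μ v⟩,
      phibar_eta e he V μ hadd' hk' hmul hid v⟩
  refine ⟨LinearEquiv.ofBijective Gl ⟨hinj, hsurj⟩, ?_⟩
  intro c x y hyx
  show Gl y = μ c (Gl x)
  rw [hGl_apply, hGl_apply,
    show ((y : Mq e he V μ)) = (c : A) • (x : Mq e he V μ) from hyx, hφ]
  exact phibar_corner e he V μ hadd' hk' hmul c _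

end Part2c

end EMAux

namespace EMAux

section Part1

variable {K : Type u} [CommRing K]
variable {A : Type u} [NonUnitalRing A] [Module K A]
  [SMulCommClass K A A] [IsScalarTower K A A]
variable {M N : Type u} [AddCommGroup M] [Module K M] [NUMod K A M]
  [AddCommGroup N] [Module K N] [NUMod K A N]

instance : NUMod K A (M × N) :=
  { (inferInstance : SMul A (M × N)) with
    asmul_add := fun a m n => by
      ext
      · show a • (m + n).1 = a • m.1 + a • n.1
        rw [Prod.fst_add, NUMod.asmul_add]
      · show a • (m + n).2 = a • m.2 + a • n.2
        rw [Prod.snd_add, NUMod.asmul_add]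
    add_asmul := fun a b m => by
      ext
      · exact NUMod.add_asmul a b m.1
      · exact NUMod.add_asmul a b m.2
    mul_asmul := fun a b m => by
      ext
      · exact NUMod.mul_asmul a b m.1
      · exact NUMod.mul_asmul a b m.2
    asmul_ksmul := fun k a m => by
      ext
      · show a • (k • m).1 = k • (a • m.1)
        rw [Prod.smul_fst, NUMod.asmul_ksmul]
      · show a • (k • m).2 = k • (a • m.2)
        rw [Prod.smul_snd, NUMod.asmul_ksmul]
    ksmul_asmul := fun k a m => by
      ext
      · show (k • a) • m.1 = k • (a • m.1)
        rw [NUMod.ksmul_asmul]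
      · show (k • a) • m.2 = k • (a • m.2)
        rw [NUMod.ksmul_asmul] }

theorem prod_asmul (a : A) (p : M × N) : a • p = (a • p.1, a • p.2) := rfl

theorem nondeg_prod (hA : Idempotented A) (hM : Nondeg K A M) (hN : Nondeg K A N) :
    Nondeg K A (M × N) := by
  intro p
  obtain ⟨e₁, he₁, h1⟩ := hM p.1
  obtain ⟨e₂, he₂, h2⟩ := hN p.2
  obtain ⟨f, hf, hff₁, -, hff₂, -⟩ := hA.2 e₁ e₂ he₁ he₂
  refine ⟨f, hf, ?_⟩
  ext
  · show f • p.1 = p.1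
    rw [← h1, ← NUMod.mul_asmul, hff₁]
  · show f • p.2 = p.2
    rw [← h2, ← NUMod.mul_asmul, hff₂]

theorem aeSpan_prod (e : A) (hM : aeSpan K e M = ⊤) (hN : aeSpan K e N = ⊤) :
    aeSpan K e (M × N) = ⊤ := by
  have hinl : Submodule.map (LinearMap.inl K M N) (aeSpan K e M) ≤ aeSpan K e (M × N) := by
    rw [aeSpan, Submodule.map_span, aeSpan, Submodule.span_le]
    rintro _ ⟨x, ⟨a, m, rfl⟩, rfl⟩
    apply Submodule.subset_span
    refine ⟨a, (m, 0), ?_⟩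
    rw [prod_asmul, prod_asmul]
    show (a • (e • m), a • (e • (0 : N))) = _
    rw [asmul_zero K A e, asmul_zero K A a]
    rfl
  have hinr : Submodule.map (LinearMap.inr K M N) (aeSpan K e N) ≤ aeSpan K e (M × N) := by
    rw [aeSpan, Submodule.map_span, aeSpan, Submodule.span_le]
    rintro _ ⟨x, ⟨a, m, rfl⟩, rfl⟩
    apply Submodule.subset_span
    refine ⟨a, (0, m), ?_⟩
    rw [prod_asmul, prod_asmul]
    show (a • (e • (0 : M)), a • (e • m)) = _
    rw [asmul_zero K A e, asmul_zero K A a]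
    rfl
  rw [eq_top_iff]
  rintro ⟨m, n⟩ -
  have h1 : ((m, 0) : M × N) ∈ aeSpan K e (M × N) :=
    hinl ⟨m, by rw [hM]; trivial, rfl⟩
  have h2 : ((0, n) : M × N) ∈ aeSpan K e (M × N) :=
    hinr ⟨n, by rw [hN]; trivial, rfl⟩
  have : ((m, n) : M × N) = (m, 0) + (0, n) := by rw [Prod.mk_add_mk, add_zero, zero_add]
  rw [this]
  exact Submodule.add_mem _ h1 h2

end Part1

end EMAux

namespace EMAux

section Part1b

variable {K : Type u} [CommRing K]
variable {A : Type u} [NonUnitalRing A] [Module K A]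
  [SMulCommClass K A A] [IsScalarTower K A A]

theorem part1 (hA : Idempotented A) (e : A) (he : e * e = e) (hsp : LeftSpecial K A e)
    (M N : Type u) [AddCommGroup M] [Module K M] [NUMod K A M]
    [AddCommGroup N] [Module K N] [NUMod K A N]
    (hMn : Nondeg K A M) (hMs : aeSpan K e M = ⊤)
    (hNn : Nondeg K A N) (hNs : aeSpan K e N = ⊤)
    (g : ↥(eSub K e M) →ₗ[K] ↥(eSub K e N))
    (hg : ∀ (c : ↥(corner e he)) (x y : ↥(eSub K e M)),
      (y : M) = (c : A) • (x : M) → ((g y : N)) = (c : A) • ((g x : N))) :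
    ∃! f : M →ₗ[K] N, IsAMap K A f ∧ ∀ x : ↥(eSub K e M), f ↑x = ↑(g x) := by
  have hmem : ∀ m : M, e • m ∈ eSub K e M := fun m => ⟨m, rfl⟩
  have pzero : ∀ a : A, a • (0 : M × N) = 0 := fun a => asmul_zero (M := M × N) K A a
  have pmul : ∀ (a b : A) (p : M × N), a • (b • p) = (a * b) • p :=
    fun a b p => (NUMod.mul_asmul (K := K) a b p).symm
  have padd : ∀ (a : A) (p q : M × N), a • (p + q) = a • p + a • q :=
    fun a p q => NUMod.asmul_add (K := K) a p q
  have pksmul : ∀ (k : K) (a : A) (p : M × N), a • (k • p) = k • (a • p) :=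
    fun k a p => NUMod.asmul_ksmul (A := A) k a p
  set G : M → M × N := fun m => (e • m, (g ⟨e • m, hmem m⟩ : N)) with hGdef
  set S : Set (M × N) := {x : M × N | ∃ (a : A) (m : M), x = a • G m} with hSdef
  set H : Submodule K (M × N) := Submodule.span K S with hHdef
  -- `e` fixes graph points
  have hGfix : ∀ m : M, e • G m = G m := by
    intro m
    ext
    · show e • (e • m) = e • m
      exact eFix he (hmem m)
    · show e • ((g ⟨e • m, hmem m⟩ : ↥(eSub K e N)) : N) = _
      exact eFix he (g ⟨e • m, hmem m⟩).2
  have hGH : ∀ m : M, G m ∈ H := fun m =>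
    Submodule.subset_span ⟨e, m, (hGfix m).symm⟩
  have hHstab : AStable K A H := by
    apply aStable_span
    rintro a _ ⟨b, m, rfl⟩
    apply Submodule.subset_span
    exact ⟨a * b, m, pmul a b (G m)⟩
  -- G is "additive" etc.
  have hGzero : G 0 = 0 := by
    have h0 : (⟨e • (0 : M), hmem 0⟩ : ↥(eSub K e M)) = 0 :=
      Subtype.ext (asmul_zero K A e)
    ext
    · exact asmul_zero K A e
    · show ((g ⟨e • (0 : M), hmem 0⟩ : ↥(eSub K e N)) : N) = 0
      rw [h0, map_zero]
      rfl
  have hGadd : ∀ m₁ m₂ : M, G m₁ + G m₂ = G (m₁ + m₂) := by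
    intro m₁ m₂
    have hv : (⟨e • m₁, hmem m₁⟩ : ↥(eSub K e M)) + ⟨e • m₂, hmem m₂⟩
        = ⟨e • (m₁ + m₂), hmem _⟩ :=
      Subtype.ext (NUMod.asmul_add e m₁ m₂).symm
    ext
    · show e • m₁ + e • m₂ = e • (m₁ + m₂)
      exact (NUMod.asmul_add e m₁ m₂).symm
    · show ((g ⟨e • m₁, hmem m₁⟩ : ↥(eSub K e N)) : N) + ((g ⟨e • m₂, hmem m₂⟩ : ↥(eSub K e N)) : N)
        = ((g ⟨e • (m₁ + m₂), hmem _⟩ : ↥(eSub K e N)) : N)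
      rw [← hv, map_add]
      rfl
  have hGsmul : ∀ (k : K) (m : M), k • G m = G (k • m) := by
    intro k m
    have hv : k • (⟨e • m, hmem m⟩ : ↥(eSub K e M)) = ⟨e • (k • m), hmem _⟩ :=
      Subtype.ext (NUMod.asmul_ksmul k e m).symm
    ext
    · show k • (e • m) = e • (k • m)
      exact (NUMod.asmul_ksmul k e m).symm
    · show k • ((g ⟨e • m, hmem m⟩ : ↥(eSub K e N)) : N)
        = ((g ⟨e • (k • m), hmem _⟩ : ↥(eSub K e N)) : N)
      rw [← hv, map_smul]
      rfl
  -- key: e · H lies on the graph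
  have hkey : ∀ x ∈ H, ∃ m' : M, e • x = G m' := by
    intro x hx
    induction hx using Submodule.span_induction with
    | mem x hx =>
      obtain ⟨a, m, rfl⟩ := hx
      refine ⟨(a * e) • m, ?_⟩
      rw [pmul e a (G m)]
      have hcmem : e * a * e ∈ corner e he := corner_mem' he a
      set c : ↥(corner e he) := ⟨e * a * e, hcmem⟩ with hc
      have hyv : (e • ((a * e) • m) : M)
          = (c : A) • ((⟨e • m, hmem m⟩ : ↥(eSub K e M)) : M) := by
        show e • ((a * e) • m) = (e * a * e) • (e • m)
        rw [← NUMod.mul_asmul, ← NUMod.mul_asmul, mul_corner_right he a, ← mul_assoc]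
      have hgy := hg c ⟨e • m, hmem m⟩ ⟨e • ((a * e) • m), hmem _⟩ hyv
      ext
      · show (e * a) • (e • m) = e • ((a * e) • m)
        rw [← NUMod.mul_asmul, ← NUMod.mul_asmul, mul_assoc]
      · show (e * a) • ((g ⟨e • m, hmem m⟩ : ↥(eSub K e N)) : N)
          = ((g ⟨e • ((a * e) • m), hmem _⟩ : ↥(eSub K e N)) : N)
        rw [hgy]
        show (e * a) • ((g ⟨e • m, hmem m⟩ : ↥(eSub K e N)) : N)
          = (e * a * e) • ((g ⟨e • m, hmem m⟩ : ↥(eSub K e N)) : N)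
        conv_lhs => rw [← eFix he (g ⟨e • m, hmem m⟩).2]
        rw [← NUMod.mul_asmul]
    | zero =>
      exact ⟨0, by
        rw [pzero e, hGzero]⟩
    | add x y hx hy ihx ihy =>
      obtain ⟨m₁, h₁⟩ := ihx
      obtain ⟨m₂, h₂⟩ := ihy
      exact ⟨m₁ + m₂, by
        rw [padd e x y, h₁, h₂, hGadd]⟩
    | smul k x hx ihx =>
      obtain ⟨m₁, h₁⟩ := ihx
      exact ⟨k • m₁, by
        rw [pksmul k e x, h₁, hGsmul]⟩
  -- the kernel of the first projection restricted to H is zero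
  set Ksub : Submodule K (M × N) := H ⊓ LinearMap.ker (LinearMap.fst K M N) with hKdef
  have hKstab : AStable K A Ksub := by
    intro a m hm
    rw [hKdef, Submodule.mem_inf] at hm ⊢
    obtain ⟨hmH, hm0⟩ := hm
    rw [LinearMap.mem_ker] at hm0 ⊢
    refine ⟨hHstab a m hmH, ?_⟩
    show a • m.1 = 0
    rw [show m.1 = (0 : M) from hm0, asmul_zero K A a]
  have hKzero : ∀ x ∈ Ksub, e • x = 0 := by
    intro x hx
    rw [hKdef, Submodule.mem_inf] at hx
    obtain ⟨hxH, hx0⟩ := hx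
    rw [LinearMap.mem_ker] at hx0
    obtain ⟨m', hm'⟩ := hkey x hxH
    have h1 : e • m' = 0 := by
      have h := congrArg Prod.fst hm'
      show (G m').1 = 0
      rw [← h]
      show e • x.1 = 0
      rw [show x.1 = (0 : M) from hx0, asmul_zero K A e]
    have h2 : (⟨e • m', hmem m'⟩ : ↥(eSub K e M)) = 0 := Subtype.ext h1
    have h3 : G m' = 0 := by
      ext
      · exact h1
      · show ((g ⟨e • m', hmem m'⟩ : ↥(eSub K e N)) : N) = 0
        rw [h2, map_zero]
        rfl
    rw [hm', h3]
  have hKbot : Ksub = ⊥ := by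
    have hbotst : AStable K A (⊥ : Submodule K (M × N)) := by
      intro a m hm
      rw [Submodule.mem_bot] at hm ⊢
      rw [hm]
      exact pzero a
    have h1 := hsp (M × N) (nondeg_prod hA hMn hNn) (aeSpan_prod e hMs hNs)
      ⊥ Ksub hbotst hKstab bot_le
    have h2 : Submodule.span K {x : M × N | ∃ a : A, ∃ m ∈ Ksub, a • (e • m) = x}
        ≤ ⊥ := by
      rw [Submodule.span_le]
      rintro x ⟨a, m, hm, rfl⟩
      rw [SetLike.mem_coe, Submodule.mem_bot, hKzero m hm]
      exact pzero a
    exact le_bot_iff.mp (le_trans h1 (sup_le bot_le h2))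
  have huniq2 : ∀ (m : M) (n n' : N), (m, n) ∈ H → (m, n') ∈ H → n = n' := by
    intro m n n' h1 h2
    have hd : ((m, n) - (m, n') : M × N) ∈ Ksub := by
      rw [hKdef, Submodule.mem_inf]
      refine ⟨Submodule.sub_mem _ h1 h2, ?_⟩
      rw [LinearMap.mem_ker]
      show m - m = 0
      rw [sub_self]
    rw [hKbot, Submodule.mem_bot] at hd
    have h4 : ((m, n) : M × N) = (m, n') := sub_eq_zero.mp hd
    exact (Prod.ext_iff.mp h4).2
  -- first projection restricted to H
  set p : ↥H →ₗ[K] M := (LinearMap.fst K M N).comp H.subtype with hpdef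
  have hpinj : Function.Injective p := by
    intro a b hab
    have hd : ((a : M × N) - b) ∈ Ksub := by
      rw [hKdef, Submodule.mem_inf]
      refine ⟨Submodule.sub_mem _ a.2 b.2, ?_⟩
      rw [LinearMap.mem_ker]
      show (a : M × N).1 - (b : M × N).1 = 0
      rw [show (a : M × N).1 = (b : M × N).1 from hab, sub_self]
    rw [hKbot, Submodule.mem_bot] at hd
    exact Subtype.ext (sub_eq_zero.mp hd)
  have hpsur : ∀ m : M, ∃ h : ↥H, p h = m := by
    intro m
    have hm : m ∈ aeSpan K e M := by rw [hMs]; trivial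
    induction hm using Submodule.span_induction with
    | mem x hx =>
      obtain ⟨a, m₀, rfl⟩ := hx
      exact ⟨⟨a • G m₀, Submodule.subset_span ⟨a, m₀, rfl⟩⟩, rfl⟩
    | zero => exact ⟨0, map_zero p⟩
    | add x y hx hy ihx ihy =>
      obtain ⟨h₁, hh₁⟩ := ihx
      obtain ⟨h₂, hh₂⟩ := ihy
      exact ⟨h₁ + h₂, by rw [map_add, hh₁, hh₂]⟩
    | smul k x hx ihx =>
      obtain ⟨h₁, hh₁⟩ := ihx
      exact ⟨k • h₁, by rw [map_smul, hh₁]⟩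
  have hpbij : Function.Bijective p := ⟨hpinj, fun m => hpsur m⟩
  set q : M ≃ₗ[K] ↥H := LinearEquiv.ofBijective p hpbij |>.symm with hqdef
  set f : M →ₗ[K] N := (LinearMap.snd K M N).comp (H.subtype.comp q.toLinearMap)
    with hfdef
  have hfpair : ∀ m : M, ((m, f m) : M × N) ∈ H := by
    intro m
    have hpq : p (q m) = m := (LinearEquiv.ofBijective p hpbij).apply_symm_apply m
    have h1 : ((q m : ↥H) : M × N) = (m, f m) := by
      ext
      · exact hpq
      · rfl
    rw [← h1]
    exact (q m).2
  have hfA : IsAMap K A f := by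
    intro a m
    have h1 : ((a • m, a • f m) : M × N) ∈ H := hHstab a _ (hfpair m)
    exact huniq2 (a • m) (f (a • m)) (a • f m) (hfpair (a • m)) h1
  have hfg : ∀ x : ↥(eSub K e M), f ↑x = ↑(g x) := by
    intro x
    obtain ⟨m, hm⟩ := x.2
    have hx : (⟨e • m, hmem m⟩ : ↥(eSub K e M)) = x := Subtype.ext hm
    have h1 : (((x : M), ((g x) : N)) : M × N) ∈ H := by
      rw [← hx]
      exact hGH m
    exact huniq2 _ _ _ (hfpair (x : M)) h1
  refine ⟨f, ⟨hfA, hfg⟩, ?_⟩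
  intro f' hf'
  obtain ⟨hfA', hfg'⟩ := hf'
  apply LinearMap.ext
  intro m
  have hm : m ∈ aeSpan K e M := by rw [hMs]; trivial
  induction hm using Submodule.span_induction with
  | mem x hx =>
    obtain ⟨a, m₀, rfl⟩ := hx
    rw [hfA' a (e • m₀), hfA a (e • m₀)]
    have h1 := hfg' ⟨e • m₀, hmem m₀⟩
    have h2 := hfg ⟨e • m₀, hmem m₀⟩
    show a • f' (e • m₀) = a • f (e • m₀)
    rw [show f' (e • m₀) = ((g ⟨e • m₀, hmem m₀⟩ : ↥(eSub K e N)) : N) from h1,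
      show f (e • m₀) = ((g ⟨e • m₀, hmem m₀⟩ : ↥(eSub K e N)) : N) from h2]
  | zero => rw [map_zero, map_zero]
  | add x y hx hy ihx ihy => rw [map_add, map_add, ihx, ihy]
  | smul k x hx ihx => rw [map_smul, map_smul, ihx]

end Part1b

end EMAux

/-- for a left special idempotent `e` of an idempotented algebra `A`, the
functor `Hom_A(Ae, −) ≅ (M ↦ eM)` is an equivalence of categories from
`M(A)_e = {M | M = AeM}` to the category of unital `eAe`-modules, with quasi-inverse
`A ⊗_{eAe} (−)`.  This is expressed by: (full faithfulness) for `M, N ∈ M(A)_e`, every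
`eAe`-linear map `eM → eN` extends uniquely to an `A`-linear map `M → N`; and
(essential surjectivity) every unital `eAe`-module `V` (given by an action `μ` of the
corner ring `eAe` on `V`) is isomorphic, `eAe`-equivariantly, to `eM` for some
`M ∈ M(A)_e`. -/
theorem eM_functor_equivalence
    {K A : Type u} [CommRing K] [NonUnitalRing A] [Module K A]
    [SMulCommClass K A A] [IsScalarTower K A A]
    (hA : Idempotented A) (e : A) (he : e * e = e) (hsp : LeftSpecial K A e) :
    -- Hom_A(Ae, −) = eM is fully faithful on M(A)_e
    (∀ (M N : Type u) [AddCommGroup M] [Module K M] [NUMod K A M]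
        [AddCommGroup N] [Module K N] [NUMod K A N],
      Nondeg K A M → aeSpan K e M = ⊤ → Nondeg K A N → aeSpan K e N = ⊤ →
      ∀ g : ↥(eSub K e M) →ₗ[K] ↥(eSub K e N),
        (∀ (c : ↥(corner e he)) (x y : ↥(eSub K e M)),
          (y : M) = (c : A) • (x : M) → ((g y : N)) = (c : A) • ((g x : N))) →
        ∃! f : M →ₗ[K] N, IsAMap K A f ∧ ∀ x : ↥(eSub K e M), f ↑x = ↑(g x)) ∧
    -- Hom_A(Ae, −) is essentially surjective onto M(eAe)
    (∀ (V : Type u) [AddCommGroup V] [Module K V],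
      ∀ μ : ↥(corner e he) → V →ₗ[K] V,
        (∀ c c' : ↥(corner e he), μ (c * c') = μ c ∘ₗ μ c') →
        (∀ (c c' : ↥(corner e he)) (v : V), μ (c + c') v = μ c v + μ c' v) →
        (μ ⟨e, e_mem_corner e he⟩ = LinearMap.id) →
        (∀ (k : K) (c c' : ↥(corner e he)), (c' : A) = k • (c : A) →
          ∀ v : V, μ c' v = k • μ c v) →
        ∃ M : ModBundle K A, Nondeg K A M.carrier ∧ aeSpan K e M.carrier = ⊤ ∧
          ∃ g : ↥(eSub K e M.carrier) ≃ₗ[K] V,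
            ∀ (c : ↥(corner e he)) (x y : ↥(eSub K e M.carrier)),
              (y : M.carrier) = (c : A) • (x : M.carrier) → g y = μ c (g x)) := by
  constructor
  · intro M N _ _ _ _ _ _ hMn hMs hNn hNs g hg
    exact EMAux.part1 hA e he hsp M N hMn hMs hNn hNs g hg
  · intro V _ _ μ hmul hadd hid hk
    exact EMAux.part2 hA e he V μ hmul hadd hid hk
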